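/- arXiv:2012.02275 — 3 statements merged into one kernel-verified Lean document; each statement's English description precedes it below -/
import Mathlib

section
/- Under the setup of the previous statements, if g' is nonnegative everywhere and the aligned strength is non-positive (γ_s ≤ 0, i.e., the features in s are not aligned with the output), then Δ_s ≤ -δ · g'(δ·Σ_j |w_j| - c·⟨z, w⟩) ≤ 0, so the shrinkage of attributions over s is at least δ times the loss derivative. -/
/-- If `g' ≥ 0` everywhere and the aligned strength is non-positive (`γ_s ≤ 0`), then
`Δ_s ≤ -δ * g' (δ * ∑ j, |w j| - c * ⟨z, w⟩) ≤ 0`: the shrinkage of attributions over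
`s` is at least `δ` times the loss derivative. -/
theorem concentration_change_strong_shrinkage (n : ℕ) (g : ℝ → ℝ)
    (hg : Differentiable ℝ g) (hg' : ∀ t : ℝ, 0 ≤ deriv g t)
    (z w : Fin n → ℝ) (c δ : ℝ) (hδ : 0 ≤ δ)
    (s : Finset (Fin n)) (hs : 0 < ∑ i ∈ s, |w i|)
    (hγ : c * (∑ i ∈ s, w i * z i) / (∑ i ∈ s, |w i|) ≤ 0) :
    (∑ i ∈ s, w i * (deriv g (δ * ∑ j, |w j| - c * ∑ j, z j * w j)
        * (c * z i - δ * Real.sign (w i)))) / (∑ i ∈ s, |w i|)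
      ≤ -δ * deriv g (δ * ∑ j, |w j| - c * ∑ j, z j * w j) ∧
    -δ * deriv g (δ * ∑ j, |w j| - c * ∑ j, z j * w j) ≤ 0 := by
  set D := deriv g (δ * ∑ j, |w j| - c * ∑ j, z j * w j) with hD
  have hD0 : 0 ≤ D := hg' _
  have hsign : ∀ i : Fin n, w i * Real.sign (w i) = |w i| := by
    intro i
    rcases lt_trichotomy (w i) 0 with h | h | h
    · rw [Real.sign_of_neg h, abs_of_neg h]; ring
    · simp [h]
    · rw [Real.sign_of_pos h, abs_of_pos h]; ring
  have key : (∑ i ∈ s, w i * (D * (c * z i - δ * Real.sign (w i))))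
      = D * c * (∑ i ∈ s, w i * z i) - δ * D * (∑ i ∈ s, |w i|) := by
    rw [Finset.mul_sum, Finset.mul_sum, ← Finset.sum_sub_distrib]
    apply Finset.sum_congr rfl
    intro i _
    rw [← hsign i]; ring
  constructor
  · rw [key, sub_div]
    have h1 : D * c * (∑ i ∈ s, w i * z i) / (∑ i ∈ s, |w i|)
        = D * (c * (∑ i ∈ s, w i * z i) / (∑ i ∈ s, |w i|)) := by ring
    have h2 : δ * D * (∑ i ∈ s, |w i|) / (∑ i ∈ s, |w i|) = δ * D := by
      field_simp
    rw [h1, h2]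
    have : D * (c * (∑ i ∈ s, w i * z i) / (∑ i ∈ s, |w i|)) ≤ 0 :=
      mul_nonpos_of_nonneg_of_nonpos hD0 hγ
    linarith
  · have : 0 ≤ δ * D := mul_nonneg hδ hD0
    linarith
end

section
/- Let g : ℝ → ℝ be differentiable, nondecreasing, and convex (so g' is nonnegative and nondecreasing), let z, w ∈ ℝ^n, c ∈ ℝ, and let s be a subset of coordinates with Σ_{i ∈ s} |w_i| > 0 and γ_s = c·Σ_{i ∈ s} w_i z_i / Σ_{i ∈ s} |w_i|. For a robustness level δ ≥ 0 write Δ_s(δ) = g'(δ·Σ_j |w_j| - c·⟨z, w⟩)·(γ_s - δ). Then for any δ₁, δ₂ with γ_s ≤ δ₁ ≤ δ₂, one has Δ_s(δ₂) ≤ Δ_s(δ₁) ≤ 0. That is, increasing the robustness level of the trigger makes the shrinkage of the attributions over s at least as strong, concentrating the attributions further. -/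
/-- For `g` differentiable, nondecreasing and convex (so `g'` is nonnegative and
nondecreasing), writing `Δ_s δ = g' (δ * ∑ j, |w j| - c * ⟨z, w⟩) * (γ_s - δ)`,
for any `γ_s ≤ δ₁ ≤ δ₂` (with `0 ≤ δ₁`) one has `Δ_s δ₂ ≤ Δ_s δ₁ ≤ 0`: increasing
the robustness level makes the shrinkage of the attributions at least as strong. -/
theorem concentration_change_antitone_in_robustness (n : ℕ) (g : ℝ → ℝ)
    (hg : Differentiable ℝ g) (hmono : Monotone g) (hconv : ConvexOn ℝ Set.univ g)
    (z w : Fin n → ℝ) (c : ℝ) (s : Finset (Fin n)) (hs : 0 < ∑ i ∈ s, |w i|)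
    (δ₁ δ₂ : ℝ) (hδ₁ : 0 ≤ δ₁) (h12 : δ₁ ≤ δ₂)
    (hγ : c * (∑ i ∈ s, w i * z i) / (∑ i ∈ s, |w i|) ≤ δ₁) :
    deriv g (δ₂ * ∑ j, |w j| - c * ∑ j, z j * w j)
        * (c * (∑ i ∈ s, w i * z i) / (∑ i ∈ s, |w i|) - δ₂)
      ≤ deriv g (δ₁ * ∑ j, |w j| - c * ∑ j, z j * w j)
        * (c * (∑ i ∈ s, w i * z i) / (∑ i ∈ s, |w i|) - δ₁) ∧
    deriv g (δ₁ * ∑ j, |w j| - c * ∑ j, z j * w j)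
        * (c * (∑ i ∈ s, w i * z i) / (∑ i ∈ s, |w i|) - δ₁) ≤ 0 := by
  set γ := c * (∑ i ∈ s, w i * z i) / (∑ i ∈ s, |w i|) with hγdef
  have hderiv_nonneg : ∀ x : ℝ, 0 ≤ deriv g x := by
    intro x
    have h1 : slope g (x - 1) x ≤ deriv g x :=
      hconv.slope_le_deriv trivial trivial (by linarith) (hg x)
    have h2 : 0 ≤ slope g (x - 1) x := by
      rw [slope_def_field]
      have := hmono (show x - 1 ≤ x by linarith)
      have : (0:ℝ) ≤ g x - g (x - 1) := by linarith
      have hd : (0:ℝ) < x - (x - 1) := by linarith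
      positivity
    linarith
  set x₁ := δ₁ * ∑ j, |w j| - c * ∑ j, z j * w j
  set x₂ := δ₂ * ∑ j, |w j| - c * ∑ j, z j * w j
  have hsum : (0:ℝ) ≤ ∑ j, |w j| := Finset.sum_nonneg fun j _ => abs_nonneg _
  have hx12 : x₁ ≤ x₂ := by
    have : δ₁ * ∑ j, |w j| ≤ δ₂ * ∑ j, |w j| := mul_le_mul_of_nonneg_right h12 hsum
    simp only [x₁, x₂]; linarith
  have hdmono : deriv g x₁ ≤ deriv g x₂ :=
    hconv.monotoneOn_deriv (fun y _ => hg y) trivial trivial hx12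
  have h1 : deriv g x₁ * (γ - δ₁) ≤ 0 :=
    mul_nonpos_of_nonneg_of_nonpos (hderiv_nonneg x₁) (by linarith)
  refine ⟨?_, h1⟩
  calc deriv g x₂ * (γ - δ₂) ≤ deriv g x₂ * (γ - δ₁) :=
        mul_le_mul_of_nonneg_left (by linarith) (hderiv_nonneg x₂)
    _ ≤ deriv g x₁ * (γ - δ₁) :=
        mul_le_mul_of_nonpos_right hdmono (by linarith)
end

section
/- Under the integrability hypotheses of the previous statement, if additionally g' is nonnegative everywhere and γ_s(ω) ≤ δ holds μ-almost everywhere, then the expected concentration change satisfies Δ_s ≤ 0: the expected SGD update shrinks the weighted attributions over the feature subset s. -/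
open MeasureTheory

lemma self_mul_sign' (x : ℝ) : x * Real.sign x = |x| := by
  rcases lt_trichotomy x 0 with h | h | h
  · rw [Real.sign_of_neg h, abs_of_neg h]; ring
  · simp [h]
  · rw [Real.sign_of_pos h, abs_of_pos h]; ring

/-- Under the integrability hypotheses, if `g' ≥ 0` everywhere and
`γ_s ω ≤ δ` holds `μ`-almost everywhere, then the expected concentration change
satisfies `Δ_s ≤ 0`: the expected SGD update shrinks the weighted attributions
over the feature subset `s`. -/
theorem expected_concentration_change_nonpos (n : ℕ)
    {Ω : Type*} [MeasurableSpace Ω] (μ : Measure Ω) [IsProbabilityMeasure μ]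
    (z : Ω → Fin n → ℝ) (g : ℝ → ℝ) (hg : Differentiable ℝ g)
    (hg' : ∀ t : ℝ, 0 ≤ deriv g t)
    (w : Fin n → ℝ) (c δ : ℝ) (hδ : 0 ≤ δ)
    (s : Finset (Fin n)) (hs : 0 < ∑ i ∈ s, |w i|)
    (hint : ∀ i : Fin n, Integrable
      (fun ω => deriv g (δ * ∑ j, |w j| - c * ∑ j, z ω j * w j)
        * (c * z ω i - δ * Real.sign (w i))) μ)
    (hγ : ∀ᵐ ω ∂μ, c * (∑ i ∈ s, w i * z ω i) / (∑ i ∈ s, |w i|) ≤ δ) :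
    (∑ i ∈ s, w i * ∫ ω, deriv g (δ * ∑ j, |w j| - c * ∑ j, z ω j * w j)
        * (c * z ω i - δ * Real.sign (w i)) ∂μ) / (∑ i ∈ s, |w i|) ≤ 0 := by
  apply div_nonpos_of_nonpos_of_nonneg _ hs.le
  have h1 : (∑ i ∈ s, w i * ∫ ω, deriv g (δ * ∑ j, |w j| - c * ∑ j, z ω j * w j)
        * (c * z ω i - δ * Real.sign (w i)) ∂μ)
      = ∫ ω, ∑ i ∈ s, w i * (deriv g (δ * ∑ j, |w j| - c * ∑ j, z ω j * w j)
        * (c * z ω i - δ * Real.sign (w i))) ∂μ := by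
    rw [integral_finset_sum]
    · exact Finset.sum_congr rfl fun i _ => (integral_const_mul (w i) _).symm
    · exact fun i _ => (hint i).const_mul (w i)
  rw [h1]
  apply integral_nonpos_of_ae
  filter_upwards [hγ] with ω hω
  have hA : c * (∑ i ∈ s, w i * z ω i) ≤ δ * (∑ i ∈ s, |w i|) := by
    rw [div_le_iff₀ hs] at hω
    linarith
  have h2 : ∑ i ∈ s, w i * (deriv g (δ * ∑ j, |w j| - c * ∑ j, z ω j * w j)
        * (c * z ω i - δ * Real.sign (w i)))
      = deriv g (δ * ∑ j, |w j| - c * ∑ j, z ω j * w j)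
        * (c * (∑ i ∈ s, w i * z ω i) - δ * (∑ i ∈ s, |w i|)) := by
    set G := deriv g (δ * ∑ j, |w j| - c * ∑ j, z ω j * w j) with hG
    have key : ∀ i, w i * (G * (c * z ω i - δ * Real.sign (w i)))
        = G * (c * (w i * z ω i)) - G * (δ * |w i|) := fun i => by
      linear_combination (-(G * δ)) * self_mul_sign' (w i)
    simp only [key]
    rw [Finset.sum_sub_distrib, ← Finset.mul_sum, ← Finset.mul_sum, ← Finset.mul_sum,
      ← Finset.mul_sum]
    ring
  rw [h2]
  exact mul_nonpos_of_nonneg_of_nonpos (hg' _) (by linarith)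
end
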